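/- Let Ω_S be a topologically mixing topological Markov shift with ℙ a T-invariant probability measure supported on Ω_S, and suppose the inverse Jacobian J = dℙ/d(ℙ∘T) has a continuous version on Ω_S. Let ω ∈ supp ℙ be periodic with minimal period r. Then lim_n ℙ(A_{n+r}^ω | A_n^ω) exists and equals ∏_{j=0}^{r-1} J(T^j ω). -/

import Mathlib

open MeasureTheory Filter Topology
open scoped BigOperators

/-- The left shift on `𝒜^ℕ`. -/
def shift {𝒜 : Type*} (ω : ℕ → 𝒜) : ℕ → 𝒜 := fun n => ω (n + 1)

namespace CondLimAux
variable {𝒜 : Type*}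

def cyl (σ : ℕ → 𝒜) (n : ℕ) : Set (ℕ → 𝒜) := {γ | ∀ i < n, γ i = σ i}

lemma cyl_mono (σ : ℕ → 𝒜) {m n : ℕ} (h : m ≤ n) : cyl σ n ⊆ cyl σ m :=
  fun γ hγ i hi => hγ i (lt_of_lt_of_le hi h)

lemma measurableSet_cyl [MeasurableSpace 𝒜] [MeasurableSingletonClass 𝒜]
    (σ : ℕ → 𝒜) (n : ℕ) : MeasurableSet (cyl σ n) := by
  have : cyl σ n = ⋂ i ∈ Finset.range n, (fun γ : ℕ → 𝒜 => γ i) ⁻¹' {σ i} := by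
    ext γ; simp [cyl]
  rw [this]
  exact MeasurableSet.biInter (Set.to_countable _)
    (fun i _ => measurable_pi_apply i (measurableSet_singleton _))

lemma shift_image_cyl (σ : ℕ → 𝒜) (n : ℕ) :
    shift '' (cyl σ (n + 1)) = cyl (shift σ) n := by
  ext δ
  constructor
  · rintro ⟨γ, hγ, rfl⟩ i hi
    exact hγ (i + 1) (by omega)
  · intro hδ
    refine ⟨fun i => Nat.casesOn i (σ 0) (fun k => δ k), fun i hi => ?_, ?_⟩
    · cases i with
      | zero => rfl
      | succ k => exact hδ k (by omega)
    · funext k; rfl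

lemma shift_iterate (ω : ℕ → 𝒜) (j n : ℕ) : shift^[j] ω n = ω (n + j) := by
  induction j generalizing ω n with
  | zero => rfl
  | succ j ih =>
    rw [Function.iterate_succ_apply, ih]
    show ω (n + j + 1) = ω (n + (j + 1))
    ring_nf

lemma exists_cyl_subset [TopologicalSpace 𝒜] [DiscreteTopology 𝒜] {u : Set (ℕ → 𝒜)} {σ : ℕ → 𝒜}
    (hu : IsOpen u) (hσ : σ ∈ u) : ∃ N, cyl σ N ⊆ u := by
  rw [isOpen_pi_iff] at hu
  obtain ⟨I, V, hV, hsub⟩ := hu σ hσ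
  refine ⟨I.sup id + 1, fun γ hγ => hsub ?_⟩
  intro i hi
  have hi' : i ∈ I := hi
  have : γ i = σ i := hγ i (by
    have := Finset.le_sup (f := id) hi'
    simp at this; omega)
  rw [this]; exact (hV i hi').2

lemma prod_div_telescope (f : ℕ → ℝ) (r : ℕ) (hf : ∀ j ≤ r, f j ≠ 0) :
    ∏ j ∈ Finset.range r, f j / f (j + 1) = f 0 / f r := by
  induction r with
  | zero => simp [div_self (hf 0 le_rfl)]
  | succ r ih =>
    rw [Finset.prod_range_succ, ih (fun j hj => hf j (by omega))]
    have h1 := hf r (by omega)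
    have h2 := hf (r + 1) (by omega)
    field_simp


lemma ratio_tendsto
    [Countable 𝒜] [MeasurableSpace 𝒜] [MeasurableSingletonClass 𝒜]
    [TopologicalSpace 𝒜] [DiscreteTopology 𝒜]
    (ΩS : Set (ℕ → 𝒜)) (hΩSm : MeasurableSet ΩS)
    (ℙ ν : Measure (ℕ → 𝒜)) [IsProbabilityMeasure ℙ]
    (hΩS1 : ℙ ΩS = 1)
    (hν : ∀ E : Set (ℕ → 𝒜), MeasurableSet E →
      ν E = ∑' a : 𝒜, ℙ (shift '' (E ∩ {γ | γ 0 = a})))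
    (J : (ℕ → 𝒜) → ℝ) (hJcont : ContinuousOn J ΩS)
    (hRN : ∀ E : Set (ℕ → 𝒜), MeasurableSet E →
      ℙ E = ∫⁻ γ in E, ENNReal.ofReal (J γ) ∂ν)
    (σ : ℕ → 𝒜) (hσ : σ ∈ ΩS)
    (hstep : ∀ γ : ℕ → 𝒜, γ 0 = σ 0 → γ 1 = σ 1 → shift γ ∈ ΩS → γ ∈ ΩS)
    (hpos : ∀ n, 0 < ℙ (cyl σ n)) (hpos' : ∀ n, 0 < ℙ (cyl (shift σ) n)) :
    Tendsto (fun n => (ℙ (cyl σ (n + 1))).toReal / (ℙ (cyl (shift σ) n)).toReal)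
      atTop (𝓝 (J σ)) := by
  have hP0 : ℙ ΩSᶜ = 0 := by
    have := measure_compl hΩSm (measure_ne_top ℙ ΩS)
    rw [hΩS1] at this; simpa using this
  have key1 : ∀ n, ν (cyl σ (n + 1)) = ℙ (cyl (shift σ) n) := by
    intro n
    rw [hν _ (measurableSet_cyl _ _)]
    rw [tsum_eq_single (σ 0) ?_]
    · have h : cyl σ (n + 1) ∩ {γ : ℕ → 𝒜 | γ 0 = σ 0} = cyl σ (n + 1) := by
        apply Set.inter_eq_self_of_subset_left
        intro γ hγ; exact hγ 0 (by omega)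
      rw [h, shift_image_cyl]
    · intro a ha
      have h : cyl σ (n + 1) ∩ {γ : ℕ → 𝒜 | γ 0 = a} = ∅ := by
        ext γ
        simp only [Set.mem_inter_iff, Set.mem_empty_iff_false, iff_false, not_and]
        intro h1 h2
        exact ha ((h2.symm).trans (h1 0 (by omega)))
      rw [h]
      simp
  have key2 : ∀ n, ν (cyl σ (n + 2) ∩ ΩSᶜ) = 0 := by
    intro n
    rw [hν _ ((measurableSet_cyl _ _).inter hΩSm.compl)]
    rw [ENNReal.tsum_eq_zero]
    intro a
    apply measure_mono_null _ hP0
    rintro δ ⟨γ, ⟨⟨hγc, hγn⟩, _⟩, rfl⟩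
    simp only [Set.mem_compl_iff]
    intro hδ
    exact hγn (hstep γ (hγc 0 (by omega)) (hγc 1 (by omega)) hδ)
  have contD : ∀ ε > (0:ℝ), ∃ N, ∀ γ ∈ cyl σ N ∩ ΩS, |J γ - J σ| ≤ ε := by
    intro ε hε
    have h := hJcont σ hσ (Metric.closedBall_mem_nhds (J σ) hε)
    rw [mem_map, mem_nhdsWithin] at h
    obtain ⟨u, huo, hσu, hsub⟩ := h
    obtain ⟨N, hN⟩ := exists_cyl_subset huo hσu
    refine ⟨N, fun γ hγ => ?_⟩
    have := hsub ⟨hN hγ.1, hγ.2⟩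
    simpa [Metric.mem_closedBall, Real.dist_eq] using this
  have hsplit : ∀ n, ∫⁻ γ in cyl σ (n + 2), ENNReal.ofReal (J γ) ∂ν
      = ∫⁻ γ in cyl σ (n + 2) ∩ ΩS, ENNReal.ofReal (J γ) ∂ν := by
    intro n
    apply setLIntegral_congr
    rw [MeasureTheory.ae_eq_set]
    constructor
    · rw [Set.diff_self_inter, Set.diff_eq]
      exact key2 n
    · simp [Set.diff_eq_empty.mpr Set.inter_subset_left]
  have hmΩ : ∀ n, ν (cyl σ (n + 2) ∩ ΩS) = ν (cyl σ (n + 2)) := by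
    intro n
    have h := measure_inter_add_diff (μ := ν) (cyl σ (n + 2)) hΩSm
    rw [← h, Set.diff_eq, key2 n, add_zero]
  have hJ0 : 0 ≤ J σ := by
    by_contra hcon
    push_neg at hcon
    obtain ⟨N, hN⟩ := contD (-(J σ) / 2) (by linarith)
    have h0 : ℙ (cyl σ (N + 2)) = 0 := by
      rw [hRN _ (measurableSet_cyl _ _), hsplit N]
      have hz : ∀ γ ∈ cyl σ (N + 2) ∩ ΩS, ENNReal.ofReal (J γ) ≤ 0 := by
        intro γ hγ
        have hb := hN γ ⟨cyl_mono σ (by omega) hγ.1, hγ.2⟩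
        have : J γ ≤ 0 := by
          have := abs_le.1 hb
          linarith [this.2]
        simp [ENNReal.ofReal_eq_zero.mpr this]
      have hle : (∫⁻ γ in cyl σ (N + 2) ∩ ΩS, ENNReal.ofReal (J γ) ∂ν)
          ≤ ∫⁻ γ in cyl σ (N + 2) ∩ ΩS, (0 : ENNReal) ∂ν :=
        setLIntegral_mono measurable_const hz
      simpa using hle
    exact absurd h0 (hpos (N + 2)).ne'
  rw [Metric.tendsto_atTop]
  intro ε hε
  obtain ⟨N, hN⟩ := contD (ε / 2) (by linarith)
  refine ⟨N + 1, fun n hn => ?_⟩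
  obtain ⟨k, rfl⟩ : ∃ k, n = k + 1 := ⟨n - 1, by omega⟩
  have hAm : MeasurableSet (cyl σ (k + 2) ∩ ΩS) := (measurableSet_cyl _ _).inter hΩSm
  have hbw : ∀ γ ∈ cyl σ (k + 2) ∩ ΩS, |J γ - J σ| ≤ ε / 2 :=
    fun γ hγ => hN γ ⟨cyl_mono σ (by omega) hγ.1, hγ.2⟩
  have hB : ν (cyl σ (k + 2)) = ℙ (cyl (shift σ) (k + 1)) := key1 (k + 1)
  have hub : ℙ (cyl σ (k + 2)) ≤ ENNReal.ofReal (J σ + ε / 2) * ℙ (cyl (shift σ) (k + 1)) := by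
    rw [hRN _ (measurableSet_cyl _ _), hsplit k, ← lintegral_indicator hAm _]
    calc ∫⁻ γ, (cyl σ (k + 2) ∩ ΩS).indicator (fun γ => ENNReal.ofReal (J γ)) γ ∂ν
        ≤ ∫⁻ γ, (cyl σ (k + 2) ∩ ΩS).indicator
            (fun _ => ENNReal.ofReal (J σ + ε / 2)) γ ∂ν := by
          apply lintegral_mono
          intro γ
          by_cases hγ : γ ∈ cyl σ (k + 2) ∩ ΩS
          · simp only [Set.indicator_of_mem hγ]
            apply ENNReal.ofReal_le_ofReal
            have := abs_le.1 (hbw γ hγ)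
            linarith [this.2]
          · simp [Set.indicator_of_notMem hγ]
      _ = ENNReal.ofReal (J σ + ε / 2) * ν (cyl σ (k + 2) ∩ ΩS) :=
          lintegral_indicator_const hAm _
      _ = ENNReal.ofReal (J σ + ε / 2) * ℙ (cyl (shift σ) (k + 1)) := by
          rw [hmΩ k, hB]
  have hlb : ENNReal.ofReal (J σ - ε / 2) * ℙ (cyl (shift σ) (k + 1)) ≤ ℙ (cyl σ (k + 2)) := by
    calc ENNReal.ofReal (J σ - ε / 2) * ℙ (cyl (shift σ) (k + 1))
        = ENNReal.ofReal (J σ - ε / 2) * ν (cyl σ (k + 2) ∩ ΩS) := by rw [hmΩ k, hB]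
      _ = ∫⁻ γ, (cyl σ (k + 2) ∩ ΩS).indicator
            (fun _ => ENNReal.ofReal (J σ - ε / 2)) γ ∂ν :=
          (lintegral_indicator_const hAm _).symm
      _ ≤ ∫⁻ γ, (cyl σ (k + 2) ∩ ΩS).indicator (fun γ => ENNReal.ofReal (J γ)) γ ∂ν := by
          apply lintegral_mono
          intro γ
          by_cases hγ : γ ∈ cyl σ (k + 2) ∩ ΩS
          · simp only [Set.indicator_of_mem hγ]
            apply ENNReal.ofReal_le_ofReal
            have := abs_le.1 (hbw γ hγ)
            linarith [this.1]
          · simp [Set.indicator_of_notMem hγ]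
      _ = ∫⁻ γ in cyl σ (k + 2) ∩ ΩS, ENNReal.ofReal (J γ) ∂ν := lintegral_indicator hAm _
      _ = ∫⁻ γ in cyl σ (k + 2), ENNReal.ofReal (J γ) ∂ν := (hsplit k).symm
      _ = ℙ (cyl σ (k + 2)) := (hRN _ (measurableSet_cyl _ _)).symm
  set x := (ℙ (cyl σ (k + 1 + 1))).toReal with hx
  set y := (ℙ (cyl (shift σ) (k + 1))).toReal with hy
  have hyy : 0 < y := ENNReal.toReal_pos (hpos' _).ne' (measure_ne_top _ _)
  have hux : x ≤ (J σ + ε / 2) * y := by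
    have h := ENNReal.toReal_mono
      (ENNReal.mul_ne_top ENNReal.ofReal_ne_top (measure_ne_top _ _)) hub
    rwa [ENNReal.toReal_mul, ENNReal.toReal_ofReal (by linarith)] at h
  have hxy1 : x / y ≤ J σ + ε / 2 := (div_le_iff₀ hyy).mpr hux
  have hxy0 : 0 ≤ x / y := div_nonneg ENNReal.toReal_nonneg ENNReal.toReal_nonneg
  have hxy2 : J σ - ε / 2 ≤ x / y := by
    rcases le_or_gt (J σ - ε / 2) 0 with h | h
    · linarith
    · have hfin : ℙ (cyl σ (k + 2)) ≠ ⊤ := measure_ne_top _ _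
      have h2 := ENNReal.toReal_mono hfin hlb
      rw [ENNReal.toReal_mul, ENNReal.toReal_ofReal (by linarith)] at h2
      exact (le_div_iff₀ hyy).mpr h2
  rw [Real.dist_eq, abs_sub_lt_iff]
  constructor <;> linarith

end CondLimAux

open CondLimAux

/-- on a topologically mixing topological Markov shift `Ω_S` with a
shift-invariant probability measure `ℙ` supported on `Ω_S`, if the inverse Jacobian
`J = dℙ/d(ℙ∘T)` has a continuous version, then for every periodic `ω ∈ supp ℙ` with
minimal period `r`, `lim_n ℙ(A_{n+r}^ω | A_n^ω) = ∏_{j=0}^{r-1} J(T^j ω)`. -/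
theorem conditional_limit_of_continuous_jacobian {𝒜 : Type*} [Countable 𝒜]
    [MeasurableSpace 𝒜] [MeasurableSingletonClass 𝒜]
    [TopologicalSpace 𝒜] [DiscreteTopology 𝒜]
    (S : 𝒜 → 𝒜 → Prop)
    (ΩS : Set (ℕ → 𝒜)) (hΩS : ΩS = {γ | ∀ i, S (γ i) (γ (i + 1))})
    (hmixing : ∀ U V : Set (ℕ → 𝒜), IsOpen U → IsOpen V →
      (U ∩ ΩS).Nonempty → (V ∩ ΩS).Nonempty →
      ∃ M : ℕ, ∀ n ≥ M, ((U ∩ ΩS) ∩ (shift^[n]) ⁻¹' (V ∩ ΩS)).Nonempty)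
    (ℙ : Measure (ℕ → 𝒜)) [IsProbabilityMeasure ℙ]
    (hinv : MeasurePreserving shift ℙ ℙ) (hΩS1 : ℙ ΩS = 1)
    (ν : Measure (ℕ → 𝒜))
    (hν : ∀ E : Set (ℕ → 𝒜), MeasurableSet E →
      ν E = ∑' a : 𝒜, ℙ (shift '' (E ∩ {γ | γ 0 = a})))
    (J : (ℕ → 𝒜) → ℝ) (hJcont : ContinuousOn J ΩS)
    (hRN : ∀ E : Set (ℕ → 𝒜), MeasurableSet E →
      ℙ E = ∫⁻ γ in E, ENNReal.ofReal (J γ) ∂ν)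
    (ω : ℕ → 𝒜) (hω : ω ∈ ΩS) (r : ℕ) (hr : 0 < r)
    (hper : ∀ i, ω (i + r) = ω i)
    (hmin : ∀ r', 0 < r' → r' < r → ∃ i, ω (i + r') ≠ ω i)
    (hsupp : ∀ n, 0 < ℙ {γ | ∀ i < n, γ i = ω i}) :
    Tendsto (fun n => (ℙ {γ | ∀ i < n + r, γ i = ω i}).toReal /
        (ℙ {γ | ∀ i < n, γ i = ω i}).toReal) atTop
      (𝓝 (∏ j ∈ Finset.range r, J (shift^[j] ω))) := by
  have hΩSm : MeasurableSet ΩS := by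
    rw [hΩS]
    have h : {γ : ℕ → 𝒜 | ∀ i, S (γ i) (γ (i + 1))}
        = ⋂ i, ⋃ (a : 𝒜), ⋃ (b : 𝒜), ⋃ (_ : S a b),
            ((fun γ : ℕ → 𝒜 => γ i) ⁻¹' {a} ∩ (fun γ : ℕ → 𝒜 => γ (i + 1)) ⁻¹' {b}) := by
      ext γ
      simp only [Set.mem_setOf_eq, Set.mem_iInter, Set.mem_iUnion, Set.mem_inter_iff,
        Set.mem_preimage, Set.mem_singleton_iff]
      constructor
      · intro h i; exact ⟨γ i, γ (i + 1), h i, rfl, rfl⟩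
      · intro h i; obtain ⟨a, b, hab, h1, h2⟩ := h i; rw [h1, h2]; exact hab
    rw [h]
    apply MeasurableSet.iInter; intro i
    apply MeasurableSet.iUnion; intro a
    apply MeasurableSet.iUnion; intro b
    apply MeasurableSet.iUnion; intro _
    exact ((measurable_pi_apply i) (measurableSet_singleton _)).inter
      ((measurable_pi_apply (i + 1)) (measurableSet_singleton _))
  have hmem : ∀ j, shift^[j] ω ∈ ΩS := by
    intro j
    rw [hΩS] at hω ⊢
    intro i
    rw [shift_iterate, shift_iterate]
    have h : i + 1 + j = (i + j) + 1 := by omega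
    rw [h]
    exact hω (i + j)
  have hperiod : shift^[r] ω = ω := funext fun i => by rw [shift_iterate]; exact hper i
  have hpos : ∀ j n, 0 < ℙ (cyl (shift^[j] ω) n) := by
    intro j n
    have hsub : cyl ω (n + j) ⊆ (shift^[j]) ⁻¹' (cyl (shift^[j] ω) n) := by
      intro γ hγ i hi
      show shift^[j] γ i = shift^[j] ω i
      rw [shift_iterate, shift_iterate]
      exact hγ (i + j) (by omega)
    calc (0 : ENNReal) < ℙ (cyl ω (n + j)) := hsupp (n + j)
      _ ≤ ℙ ((shift^[j]) ⁻¹' (cyl (shift^[j] ω) n)) := measure_mono hsub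
      _ = ℙ (cyl (shift^[j] ω) n) :=
          (hinv.iterate j).measure_preimage (measurableSet_cyl _ _).nullMeasurableSet
  have hrate : ∀ j, Tendsto (fun m => (ℙ (cyl (shift^[j] ω) (m + 1))).toReal /
      (ℙ (cyl (shift^[j + 1] ω) m)).toReal) atTop (𝓝 (J (shift^[j] ω))) := by
    intro j
    have hss : shift^[j + 1] ω = shift (shift^[j] ω) := Function.iterate_succ_apply' shift j ω
    rw [hss]
    refine ratio_tendsto ΩS hΩSm ℙ ν hΩS1 hν J hJcont hRN (shift^[j] ω) (hmem j) ?_ (hpos j) ?_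
    · intro γ h0 h1 hsh
      rw [hΩS] at hsh ⊢
      intro i
      cases i with
      | zero =>
        show S (γ 0) (γ 1)
        rw [h0, h1]
        exact (hΩS ▸ hmem j) 0
      | succ k => exact hsh k
    · rw [← hss]; exact hpos (j + 1)
  have hfne : ∀ n : ℕ, ∀ j ≤ r, (ℙ (cyl (shift^[j] ω) (n + (r - j)))).toReal ≠ 0 := by
    intro n j _
    exact ENNReal.toReal_ne_zero.mpr ⟨(hpos j _).ne', measure_ne_top _ _⟩
  have hkey : ∀ n : ℕ,
      (∏ j ∈ Finset.range r, (ℙ (cyl (shift^[j] ω) ((n + (r - j - 1)) + 1))).toReal /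
          (ℙ (cyl (shift^[j + 1] ω) (n + (r - j - 1)))).toReal)
      = (ℙ {γ : ℕ → 𝒜 | ∀ i < n + r, γ i = ω i}).toReal /
        (ℙ {γ : ℕ → 𝒜 | ∀ i < n, γ i = ω i}).toReal := by
    intro n
    calc (∏ j ∈ Finset.range r, (ℙ (cyl (shift^[j] ω) ((n + (r - j - 1)) + 1))).toReal /
          (ℙ (cyl (shift^[j + 1] ω) (n + (r - j - 1)))).toReal)
        = ∏ j ∈ Finset.range r, (ℙ (cyl (shift^[j] ω) (n + (r - j)))).toReal /
            (ℙ (cyl (shift^[j + 1] ω) (n + (r - (j + 1))))).toReal := by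
          apply Finset.prod_congr rfl
          intro j hj
          have hjr : j < r := Finset.mem_range.mp hj
          have e1 : n + (r - j - 1) + 1 = n + (r - j) := by omega
          have e2 : n + (r - (j + 1)) = n + (r - j - 1) := by omega
          rw [e1, e2]
      _ = (ℙ (cyl (shift^[0] ω) (n + (r - 0)))).toReal /
            (ℙ (cyl (shift^[r] ω) (n + (r - r)))).toReal :=
          prod_div_telescope (fun j => (ℙ (cyl (shift^[j] ω) (n + (r - j)))).toReal) r (hfne n)
      _ = (ℙ {γ : ℕ → 𝒜 | ∀ i < n + r, γ i = ω i}).toReal /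
          (ℙ {γ : ℕ → 𝒜 | ∀ i < n, γ i = ω i}).toReal := by
          rw [hperiod, Function.iterate_zero_apply, Nat.sub_self, Nat.add_zero, Nat.sub_zero]
          rfl
  have hprod : Tendsto (fun n => ∏ j ∈ Finset.range r,
      (ℙ (cyl (shift^[j] ω) ((n + (r - j - 1)) + 1))).toReal /
        (ℙ (cyl (shift^[j + 1] ω) (n + (r - j - 1)))).toReal) atTop
      (𝓝 (∏ j ∈ Finset.range r, J (shift^[j] ω))) := by
    apply tendsto_finset_prod
    intro j _
    exact (hrate j).comp (tendsto_add_atTop_nat (r - j - 1))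
  exact hprod.congr hkey
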